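/- arXiv:2601.03008 — 2 statements merged into one kernel-verified Lean document; each statement's English description precedes it below -/
import Mathlib

section
/- (Proposition 1(i), sufficient descent.) Assume L ≥ L_f̃ and let V ∈ S be such that every column of G(V) is nonzero, and let V⁺ := Proj_S(G(V)) be the algorithmic update. Then Φ_ρ(V) − Φ_ρ(V⁺) ≥ ((L − L_f̃)/2)·‖V⁺ − V‖_F². -/
open Matrix

noncomputable section

/-- Squared Frobenius norm `‖A‖_F²`. -/
def frobSq {a b : ℕ} (A : Matrix (Fin a) (Fin b) ℝ) : ℝ := ∑ i, ∑ j, A i j ^ 2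

/-- Frobenius norm `‖A‖_F`. -/
def frobNorm {a b : ℕ} (A : Matrix (Fin a) (Fin b) ℝ) : ℝ := Real.sqrt (frobSq A)

/-- Trace (Frobenius) inner product `⟨A,B⟩ = tr(AᵀB)`. -/
def frobInner {a b : ℕ} (A B : Matrix (Fin a) (Fin b) ℝ) : ℝ := ∑ i, ∑ j, A i j * B i j

/-- Squared spectral norm: `sup {‖Vx‖₂² : ‖x‖₂ = 1}`. -/
def specSq {a b : ℕ} (V : Matrix (Fin a) (Fin b) ℝ) : ℝ :=
  sSup {c | ∃ x : Fin b → ℝ, (∑ j, x j ^ 2) = 1 ∧ c = ∑ i, (∑ j, V i j * x j) ^ 2}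

/-- Spectral norm (largest singular value). -/
def specNorm {a b : ℕ} (V : Matrix (Fin a) (Fin b) ℝ) : ℝ := Real.sqrt (specSq V)

/-- Membership in `S`: all columns have unit Euclidean norm. -/
def unitCols {a b : ℕ} (V : Matrix (Fin a) (Fin b) ℝ) : Prop :=
  ∀ j, ∑ i, V i j ^ 2 = 1

/-- Column-wise normalization to unit Euclidean norm (projection onto `S`). -/
def normalizeCols {a b : ℕ} (G : Matrix (Fin a) (Fin b) ℝ) : Matrix (Fin a) (Fin b) ℝ :=
  Matrix.of fun i j => G i j / Real.sqrt (∑ i', G i' j ^ 2)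

/-- `u` is a unit eigenvector of `VᵀV` associated with its largest eigenvalue `lam`
(the Rayleigh-quotient bound states that `lam` is the largest eigenvalue). -/
def isTopEigen {a b : ℕ} (V : Matrix (Fin a) (Fin b) ℝ) (lam : ℝ) (u : Fin b → ℝ) : Prop :=
  (∑ j, u j ^ 2) = 1 ∧ (Vᵀ * V) *ᵥ u = lam • u ∧
    ∀ x : Fin b → ℝ, x ⬝ᵥ ((Vᵀ * V) *ᵥ x) ≤ lam * (x ⬝ᵥ x)

/-- `Γ(V) = −2 V u uᵀ` where `u = u₁(V)`. -/
def GammaOf {a b : ℕ} (V : Matrix (Fin a) (Fin b) ℝ) (u : Fin b → ℝ) :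
    Matrix (Fin a) (Fin b) ℝ := (-2 : ℝ) • (V * vecMulVec u u)

/-- The update direction `G(V) = (2ρ+L)⁻¹ (L V − ∇f̃(V) − ρ Γ(V))`. -/
def Gmap {a b : ℕ} (gradf : Matrix (Fin a) (Fin b) ℝ → Matrix (Fin a) (Fin b) ℝ)
    (ρ L : ℝ) (V : Matrix (Fin a) (Fin b) ℝ) (u : Fin b → ℝ) : Matrix (Fin a) (Fin b) ℝ :=
  (2 * ρ + L)⁻¹ • (L • V - gradf V - ρ • GammaOf V u)

/-- Penalized objective `Φ_ρ(V) = f̃(V) + ρ(‖V‖_F² − ‖V‖²)`. -/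
def Phi {a b : ℕ} (f : Matrix (Fin a) (Fin b) ℝ → ℝ) (ρ : ℝ)
    (V : Matrix (Fin a) (Fin b) ℝ) : ℝ := f V + ρ * (frobSq V - specSq V)

/-- Stationarity residual `𝒢_ρ(V,Γ) = inf_t ‖∇f̃(V) + 2ρV + ρΓ + V·Diag(t)‖_F`. -/
def Gres {a b : ℕ} (gradf : Matrix (Fin a) (Fin b) ℝ → Matrix (Fin a) (Fin b) ℝ) (ρ : ℝ)
    (V Γ : Matrix (Fin a) (Fin b) ℝ) : ℝ :=
  ⨅ t : Fin b → ℝ, frobNorm (gradf V + (2 * ρ) • V + ρ • Γ + V * Matrix.diagonal t)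

/-- The all-ones matrix `E` scaled by `1/√m`. -/
def Escaled (a b : ℕ) : Matrix (Fin a) (Fin b) ℝ :=
  (Real.sqrt a)⁻¹ • Matrix.of fun _ _ => (1 : ℝ)

attribute [local instance] Matrix.frobeniusNormedAddCommGroup Matrix.frobeniusNormedSpace

/-- The continuous linear functional `W ↦ ⟨A, W⟩` (Frobenius pairing); used to state that
`∇f̃` is the gradient of `f̃` with respect to the trace inner product. -/
def frobCLM {a b : ℕ} (A : Matrix (Fin a) (Fin b) ℝ) :
    Matrix (Fin a) (Fin b) ℝ →L[ℝ] ℝ :=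
  LinearMap.toContinuousLinearMap
    { toFun := fun W => frobInner A W
      map_add' := fun W W' => by
        simp [frobInner, Matrix.add_apply, mul_add, Finset.sum_add_distrib]
      map_smul' := fun c W => by
        simp [frobInner, Matrix.smul_apply, smul_eq_mul, Finset.mul_sum, mul_left_comm] }


section DescentHelpers

variable {a b : ℕ}

lemma frobSq_nonneg (A : Matrix (Fin a) (Fin b) ℝ) : 0 ≤ frobSq A :=
  Finset.sum_nonneg fun _ _ => Finset.sum_nonneg fun _ _ => sq_nonneg _

lemma frobInner_le (A B : Matrix (Fin a) (Fin b) ℝ) :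
    frobInner A B ≤ frobNorm A * frobNorm B := by
  have h1 : frobInner A B = ∑ q : Fin a × Fin b, A q.1 q.2 * B q.1 q.2 := by
    rw [frobInner]; exact (Fintype.sum_prod_type (fun q : Fin a × Fin b => A q.1 q.2 * B q.1 q.2)).symm
  have h2 : frobSq A = ∑ q : Fin a × Fin b, A q.1 q.2 ^ 2 := by
    rw [frobSq]; exact (Fintype.sum_prod_type (fun q : Fin a × Fin b => A q.1 q.2 ^ 2)).symm
  have h3 : frobSq B = ∑ q : Fin a × Fin b, B q.1 q.2 ^ 2 := by
    rw [frobSq]; exact (Fintype.sum_prod_type (fun q : Fin a × Fin b => B q.1 q.2 ^ 2)).symm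
  rw [h1, frobNorm, frobNorm, h2, h3]
  exact Real.sum_mul_le_sqrt_mul_sqrt _ _ _

lemma frobInner_sub_left (A B C : Matrix (Fin a) (Fin b) ℝ) :
    frobInner (A - B) C = frobInner A C - frobInner B C := by
  simp [frobInner, Matrix.sub_apply, sub_mul, Finset.sum_sub_distrib]

lemma frobInner_sub_right (A B C : Matrix (Fin a) (Fin b) ℝ) :
    frobInner A (B - C) = frobInner A B - frobInner A C := by
  simp [frobInner, Matrix.sub_apply, mul_sub, Finset.sum_sub_distrib]

lemma frobInner_smul_left (c : ℝ) (A C : Matrix (Fin a) (Fin b) ℝ) :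
    frobInner (c • A) C = c * frobInner A C := by
  simp [frobInner, Matrix.smul_apply, smul_eq_mul, Finset.mul_sum, mul_assoc]

lemma frobSq_add (A B : Matrix (Fin a) (Fin b) ℝ) :
    frobSq (A + B) = frobSq A + 2 * frobInner A B + frobSq B := by
  have h : ∀ i j, (A i j + B i j) ^ 2 = A i j ^ 2 + 2 * (A i j * B i j) + B i j ^ 2 := by
    intros; ring
  simp only [frobSq, frobInner, Matrix.add_apply, h, Finset.sum_add_distrib, Finset.mul_sum]

lemma frobNorm_smul (t : ℝ) (A : Matrix (Fin a) (Fin b) ℝ) :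
    frobNorm (t • A) = |t| * frobNorm A := by
  have h : frobSq (t • A) = t ^ 2 * frobSq A := by
    simp [frobSq, Matrix.smul_apply, smul_eq_mul, mul_pow, Finset.mul_sum]
  rw [frobNorm, h, Real.sqrt_mul (sq_nonneg t), Real.sqrt_sq_eq_abs, frobNorm]

lemma frobNorm_mul_self (A : Matrix (Fin a) (Fin b) ℝ) :
    frobNorm A * frobNorm A = frobSq A := Real.mul_self_sqrt (frobSq_nonneg A)

lemma frobCLM_apply (A W : Matrix (Fin a) (Fin b) ℝ) : frobCLM A W = frobInner A W := rfl

lemma descent_lemma (ftilde : Matrix (Fin a) (Fin b) ℝ → ℝ)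
    (gradf : Matrix (Fin a) (Fin b) ℝ → Matrix (Fin a) (Fin b) ℝ) (Lf : ℝ)
    (hderiv : ∀ W, HasFDerivAt ftilde (frobCLM (gradf W)) W)
    (hlip : ∀ W W', frobNorm (gradf W - gradf W') ≤ Lf * frobNorm (W - W'))
    (V W : Matrix (Fin a) (Fin b) ℝ) :
    ftilde W ≤ ftilde V + frobInner (gradf V) (W - V) + Lf / 2 * frobSq (W - V) := by
  set D := W - V with hD
  set g : ℝ → ℝ := fun t => ftilde (V + t • D) with hg
  have hg' : ∀ t : ℝ, HasDerivAt g (frobInner (gradf (V + t • D)) D) t := by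
    intro t
    have h1 : HasDerivAt (fun t : ℝ => V + t • D) D t := by
      exact (((hasDerivAt_id t).smul_const D).const_add V).congr_deriv (one_smul ℝ D)
    have := (hderiv (V + t • D)).comp_hasDerivAt t h1
    exact this
  set c1 : ℝ := frobInner (gradf V) D with hc1
  set c2 : ℝ := Lf * frobSq D with hc2
  set φ : ℝ → ℝ := fun t => ftilde V + t * c1 + c2 * t ^ 2 / 2 - g t with hφ
  have hφ' : ∀ t : ℝ, HasDerivAt φ
      (c1 + c2 * t - frobInner (gradf (V + t • D)) D) t := by
    intro t
    have h1 : HasDerivAt (fun t : ℝ => ftilde V + t * c1 + c2 * t ^ 2 / 2)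
        (c1 + c2 * t) t := by
      have ha : HasDerivAt (fun t : ℝ => t * c1) c1 t := by
        simpa using (hasDerivAt_id t).mul_const c1
      have hb : HasDerivAt (fun t : ℝ => c2 * t ^ 2 / 2) (c2 * t) t := by
        have := ((hasDerivAt_pow 2 t).const_mul c2).div_const 2
        exact this.congr_deriv (by norm_num; ring)
      exact (ha.const_add (ftilde V)).add hb
    exact h1.sub (hg' t)
  have hdiff : ∀ t : ℝ, DifferentiableAt ℝ φ t := fun t => (hφ' t).differentiableAt
  have hmono : MonotoneOn φ (Set.Icc (0 : ℝ) 1) := by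
    apply monotoneOn_of_deriv_nonneg (convex_Icc 0 1)
    · exact (fun t _ => (hdiff t).continuousAt.continuousWithinAt)
    · exact fun t _ => (hdiff t).differentiableWithinAt
    · intro t ht
      rw [interior_Icc] at ht
      rw [(hφ' t).deriv]
      have key : frobInner (gradf (V + t • D)) D - c1 ≤ c2 * t := by
        have e1 : frobInner (gradf (V + t • D)) D - c1
            = frobInner (gradf (V + t • D) - gradf V) D := by
          rw [frobInner_sub_left]
        rw [e1]
        calc frobInner (gradf (V + t • D) - gradf V) D
            ≤ frobNorm (gradf (V + t • D) - gradf V) * frobNorm D := frobInner_le _ _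
          _ ≤ (Lf * frobNorm ((V + t • D) - V)) * frobNorm D := by
              have := hlip (V + t • D) V
              have hn : 0 ≤ frobNorm D := Real.sqrt_nonneg _
              exact mul_le_mul_of_nonneg_right this hn
          _ = c2 * t := by
              have h2 : (V + t • D) - V = t • D := by abel
              rw [h2, frobNorm_smul, abs_of_nonneg (le_of_lt ht.1), hc2,
                ← frobNorm_mul_self]
              ring
      linarith
  have h01 : φ 0 ≤ φ 1 := hmono (by norm_num) (by norm_num) (by norm_num)
  have hφ0 : φ 0 = ftilde V - ftilde V := by simp [hφ, hg]
  have hφ1 : φ 1 = ftilde V + c1 + c2 / 2 - ftilde W := by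
    have h1 : V + (1 : ℝ) • D = W := by rw [one_smul, hD]; abel
    have h2 : φ 1 = ftilde V + 1 * c1 + c2 * 1 ^ 2 / 2 - ftilde (V + (1 : ℝ) • D) := rfl
    rw [h2, h1]; ring
  rw [hφ0, hφ1] at h01
  have : c2 / 2 = Lf / 2 * frobSq D := by rw [hc2]; ring
  linarith

lemma sum_sq_mulVec (V : Matrix (Fin a) (Fin b) ℝ) (x : Fin b → ℝ) :
    ∑ i, (∑ j, V i j * x j) ^ 2 = x ⬝ᵥ ((Vᵀ * V) *ᵥ x) := by
  simp only [dotProduct, mulVec, Matrix.mul_apply, transpose_apply, Finset.sum_mul,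
    Finset.mul_sum, sq]
  rw [Finset.sum_comm]
  apply Finset.sum_congr rfl
  intro j _
  rw [Finset.sum_comm]
  apply Finset.sum_congr rfl
  intro k _
  apply Finset.sum_congr rfl
  intro i _
  ring

lemma specSq_bdd (W : Matrix (Fin a) (Fin b) ℝ) :
    BddAbove {c | ∃ x : Fin b → ℝ, (∑ j, x j ^ 2) = 1 ∧ c = ∑ i, (∑ j, W i j * x j) ^ 2} := by
  refine ⟨frobSq W, ?_⟩
  rintro c ⟨x, hx, rfl⟩
  rw [frobSq]
  apply Finset.sum_le_sum
  intro i _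
  calc (∑ j, W i j * x j) ^ 2 ≤ (∑ j, W i j ^ 2) * (∑ j, x j ^ 2) :=
        Finset.sum_mul_sq_le_sq_mul_sq _ _ _
    _ = ∑ j, W i j ^ 2 := by rw [hx, mul_one]

lemma specSq_ge (W : Matrix (Fin a) (Fin b) ℝ) (x : Fin b → ℝ) (hx : (∑ j, x j ^ 2) = 1) :
    ∑ i, (∑ j, W i j * x j) ^ 2 ≤ specSq W :=
  le_csSup (specSq_bdd W) ⟨x, hx, rfl⟩

lemma specSq_eq_lam (V : Matrix (Fin a) (Fin b) ℝ) (lam : ℝ) (u : Fin b → ℝ)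
    (htop : isTopEigen V lam u) : specSq V = lam := by
  obtain ⟨hu, heig, hray⟩ := htop
  have huu : u ⬝ᵥ u = 1 := by
    rw [dotProduct]; rw [← hu]; exact Finset.sum_congr rfl fun j _ => (sq (u j)).symm
  have hval : ∑ i, (∑ j, V i j * u j) ^ 2 = lam := by
    rw [sum_sq_mulVec, heig, dotProduct_smul, smul_eq_mul, huu, mul_one]
  apply le_antisymm
  · have hne : Set.Nonempty {c | ∃ x : Fin b → ℝ, (∑ j, x j ^ 2) = 1 ∧
        c = ∑ i, (∑ j, V i j * x j) ^ 2} := ⟨_, u, hu, rfl⟩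
    apply csSup_le hne
    rintro c ⟨x, hx, rfl⟩
    have hxx : x ⬝ᵥ x = 1 := by
      rw [dotProduct]; rw [← hx]; exact Finset.sum_congr rfl fun j _ => (sq (x j)).symm
    rw [sum_sq_mulVec]
    calc x ⬝ᵥ ((Vᵀ * V) *ᵥ x) ≤ lam * (x ⬝ᵥ x) := hray x
      _ = lam := by rw [hxx, mul_one]
  · rw [← hval]; exact specSq_ge V u hu

lemma gamma_inner (V D : Matrix (Fin a) (Fin b) ℝ) (u : Fin b → ℝ) :
    frobInner (GammaOf V u) D
      = -2 * ∑ i, (∑ j, V i j * u j) * (∑ j, D i j * u j) := by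
  simp only [frobInner, GammaOf, Matrix.smul_apply, Matrix.mul_apply, vecMulVec_apply,
    smul_eq_mul, Finset.mul_sum, Finset.sum_mul, neg_mul]
  apply Finset.sum_congr rfl
  intro i _
  apply Finset.sum_congr rfl
  intro j _
  apply Finset.sum_congr rfl
  intro k _
  ring

lemma colSq_pos (G : Matrix (Fin a) (Fin b) ℝ) (j : Fin b) (h : ∃ i, G i j ≠ 0) :
    0 < ∑ i, G i j ^ 2 := by
  obtain ⟨i, hi⟩ := h
  exact Finset.sum_pos' (fun _ _ => sq_nonneg _)
    ⟨i, Finset.mem_univ i, sq_pos_of_ne_zero hi⟩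

lemma unitCols_normalizeCols (G : Matrix (Fin a) (Fin b) ℝ) (h : ∀ j, ∃ i, G i j ≠ 0) :
    unitCols (normalizeCols G) := by
  intro j
  have hpos := colSq_pos G j (h j)
  have hs : Real.sqrt (∑ i', G i' j ^ 2) ^ 2 = ∑ i', G i' j ^ 2 := Real.sq_sqrt hpos.le
  simp only [unitCols, normalizeCols, Matrix.of_apply, div_pow, hs, ← Finset.sum_div]
  exact div_self (ne_of_gt hpos)

lemma normalize_opt (G : Matrix (Fin a) (Fin b) ℝ) (h : ∀ j, ∃ i, G i j ≠ 0)
    (V : Matrix (Fin a) (Fin b) ℝ) (hV : unitCols V) :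
    frobInner G V ≤ frobInner G (normalizeCols G) := by
  rw [frobInner, frobInner, Finset.sum_comm,
    Finset.sum_comm (f := fun i j => G i j * normalizeCols G i j)]
  apply Finset.sum_le_sum
  intro j _
  have hpos := colSq_pos G j (h j)
  have h1 : ∑ i, G i j * normalizeCols G i j = Real.sqrt (∑ i, G i j ^ 2) := by
    simp only [normalizeCols, Matrix.of_apply]
    rw [show (∑ i, G i j * (G i j / Real.sqrt (∑ i', G i' j ^ 2)))
        = (∑ i, G i j ^ 2) / Real.sqrt (∑ i', G i' j ^ 2) by
      rw [Finset.sum_div]; exact Finset.sum_congr rfl fun i _ => by rw [sq]; ring]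
    exact Real.div_sqrt
  rw [h1]
  calc ∑ i, G i j * V i j
      ≤ Real.sqrt (∑ i, G i j ^ 2) * Real.sqrt (∑ i, V i j ^ 2) :=
        Real.sum_mul_le_sqrt_mul_sqrt _ _ _
    _ = Real.sqrt (∑ i, G i j ^ 2) := by rw [hV j, Real.sqrt_one, mul_one]

lemma frobSq_of_unitCols (X : Matrix (Fin a) (Fin b) ℝ) (hX : unitCols X) :
    frobSq X = b := by
  have h2 : frobSq X = ∑ j, ∑ i, X i j ^ 2 := by rw [frobSq]; exact Finset.sum_comm
  have hX' : ∀ j, ∑ i, X i j ^ 2 = 1 := hX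
  rw [h2]
  simp [hX']

end DescentHelpers

/-- Proposition 1(i), sufficient descent. If `L ≥ L_f̃`, `V ∈ S`, every column
of `G(V)` is nonzero and `V⁺ = Proj_S(G(V))`, then
`Φ_ρ(V) − Φ_ρ(V⁺) ≥ ((L − L_f̃)/2)·‖V⁺ − V‖_F²`. -/
theorem dcra_sufficient_descent (m p : ℕ)
    (ftilde : Matrix (Fin m) (Fin p) ℝ → ℝ)
    (gradf : Matrix (Fin m) (Fin p) ℝ → Matrix (Fin m) (Fin p) ℝ)
    (Lf : ℝ) (hLf : 0 < Lf)
    (hderiv : ∀ W : Matrix (Fin m) (Fin p) ℝ, HasFDerivAt ftilde (frobCLM (gradf W)) W)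
    (hlip : ∀ W W' : Matrix (Fin m) (Fin p) ℝ,
      frobNorm (gradf W - gradf W') ≤ Lf * frobNorm (W - W'))
    (ρ L : ℝ) (hρ : 0 < ρ) (hL : Lf ≤ L)
    (V : Matrix (Fin m) (Fin p) ℝ) (hV : unitCols V)
    (u : Fin p → ℝ) (lam : ℝ) (htop : isTopEigen V lam u)
    (hcol : ∀ j, ∃ i, Gmap gradf ρ L V u i j ≠ 0)
    (Vp : Matrix (Fin m) (Fin p) ℝ) (hVp : Vp = normalizeCols (Gmap gradf ρ L V u)) :
    Phi ftilde ρ V - Phi ftilde ρ Vp ≥ ((L - Lf) / 2) * frobSq (Vp - V) := by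
  have hc : (0 : ℝ) < 2 * ρ + L := by linarith
  set Gm := Gmap gradf ρ L V u with hGm
  set Γ := GammaOf V u with hΓ
  set D := Vp - V with hDdef
  have hVpW : V + D = Vp := by rw [hDdef]; abel
  have hVpcols : unitCols Vp := by rw [hVp]; exact unitCols_normalizeCols _ hcol
  -- (I) descent lemma
  have hI : ftilde Vp ≤ ftilde V + frobInner (gradf V) D + Lf / 2 * frobSq D :=
    descent_lemma ftilde gradf Lf hderiv hlip V Vp
  -- (III) equal Frobenius norms
  have hIII : frobSq Vp = frobSq V := by
    rw [frobSq_of_unitCols Vp hVpcols, frobSq_of_unitCols V hV]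
  -- (II) spectral inequality
  have hu : (∑ j, u j ^ 2) = 1 := htop.1
  have hspecV : specSq V = lam := specSq_eq_lam V lam u htop
  have hII : specSq V - frobInner Γ D ≤ specSq Vp := by
    have huu : u ⬝ᵥ u = 1 := by
      rw [dotProduct]; rw [← hu]; exact Finset.sum_congr rfl fun j _ => (sq (u j)).symm
    have hval : ∑ i, (∑ j, V i j * u j) ^ 2 = lam := by
      rw [sum_sq_mulVec, htop.2.1, dotProduct_smul, smul_eq_mul, huu, mul_one]
    have hγ : frobInner Γ D = -2 * ∑ i, (∑ j, V i j * u j) * (∑ j, D i j * u j) :=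
      gamma_inner V D u
    have hexp : ∀ i, (∑ j, Vp i j * u j)
        = (∑ j, V i j * u j) + (∑ j, D i j * u j) := by
      intro i
      rw [← Finset.sum_add_distrib]
      apply Finset.sum_congr rfl
      intro j _
      have : Vp i j = V i j + D i j := by
        rw [hDdef, Matrix.sub_apply]; ring
      rw [this]; ring
    have hge : ∑ i, (∑ j, Vp i j * u j) ^ 2 ≤ specSq Vp := specSq_ge Vp u hu
    have hlow : lam + 2 * ∑ i, (∑ j, V i j * u j) * (∑ j, D i j * u j)
        ≤ ∑ i, (∑ j, Vp i j * u j) ^ 2 := by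
      have : ∀ i, (∑ j, V i j * u j) ^ 2 + 2 * ((∑ j, V i j * u j) * (∑ j, D i j * u j))
          ≤ (∑ j, Vp i j * u j) ^ 2 := by
        intro i
        rw [hexp i]
        nlinarith [sq_nonneg (∑ j, D i j * u j)]
      calc lam + 2 * ∑ i, (∑ j, V i j * u j) * (∑ j, D i j * u j)
          = ∑ i, ((∑ j, V i j * u j) ^ 2
              + 2 * ((∑ j, V i j * u j) * (∑ j, D i j * u j))) := by
            rw [Finset.sum_add_distrib, hval, ← Finset.mul_sum]
        _ ≤ ∑ i, (∑ j, Vp i j * u j) ^ 2 := Finset.sum_le_sum fun i _ => this i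
    rw [hspecV, hγ]
    linarith
  -- (IV) optimality of the projection step
  have hM : L • V - gradf V - ρ • Γ = (2 * ρ + L) • Gm := by
    rw [hGm, Gmap, smul_smul, mul_inv_cancel₀ (ne_of_gt hc), one_smul, hΓ]
  have hopt : frobInner Gm V ≤ frobInner Gm Vp := by
    rw [hVp, hGm]
    exact normalize_opt _ hcol V hV
  have hIV : 0 ≤ L * frobInner V D - frobInner (gradf V) D - ρ * frobInner Γ D := by
    have h0 : 0 ≤ frobInner Gm D := by
      rw [hDdef, frobInner_sub_right]
      -- frobInner is symmetric
      have hsymm : ∀ X Y : Matrix (Fin m) (Fin p) ℝ, frobInner X Y = frobInner Y X := by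
        intro X Y
        apply Finset.sum_congr rfl
        intro i _
        exact Finset.sum_congr rfl fun j _ => mul_comm _ _
      rw [hsymm Gm Vp, hsymm Gm V] at hopt ⊢
      linarith
    have h1 : frobInner (L • V - gradf V - ρ • Γ) D = (2 * ρ + L) * frobInner Gm D := by
      rw [hM, frobInner_smul_left]
    have h2 : frobInner (L • V - gradf V - ρ • Γ) D
        = L * frobInner V D - frobInner (gradf V) D - ρ * frobInner Γ D := by
      rw [frobInner_sub_left, frobInner_sub_left, frobInner_smul_left, frobInner_smul_left]
    rw [← h2, h1]
    exact mul_nonneg hc.le h0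
  -- (V) frobInner V D = -frobSq D / 2
  have hV5 : frobInner V D = -(frobSq D) / 2 := by
    have := frobSq_add V D
    rw [hVpW, hIII] at this
    linarith
  -- assemble
  have hIIρ : ρ * (specSq V - frobInner Γ D) ≤ ρ * specSq Vp :=
    mul_le_mul_of_nonneg_left hII hρ.le
  have hIIIρ : ρ * frobSq Vp = ρ * frobSq V := by rw [hIII]
  have hV5L : L * frobInner V D = -(L * frobSq D) / 2 := by rw [hV5]; ring
  rw [Phi, Phi, ge_iff_le]
  nlinarith [hI, hIIρ, hIIIρ, hIV, hV5L]


end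
end

section
/- (Theorem 2, lower-bound gap of the rank-one projection.) In the setting of the objective gap bound—S the unit-column matrices in ℝ^{m×p}; f̂ Lipschitz with modulus L_f̂ on symmetric p×p matrices in the Frobenius norm; f̃(V) := f̂(VᵀV); {V^k}_{k=0}^{k̄} ⊂ S with f̃(V^{k+1}) − ρ_k‖V^{k+1}‖² ≤ f̃(V^k) − ρ_k‖V^k‖² for each k < k̄; ‖V^{k̄}‖_F² − ‖V^{k̄}‖² ≤ ε; x := ‖V^{k̄}‖·P₁ with P₁ a unit top eigenvector of (V^{k̄})ᵀV^{k̄}—assume additionally that the penalty parameters are nondecreasing (ρ_{j+1} ≥ ρ_j for all j), that L_f̂ ≥ ρ_{k̄}, and that f̃(V^{k*}) ≤ υ* for some k* ∈ {0,…,k̄−1} and real number υ*. Then, with r* := rank(V^{k*}), f̂(x xᵀ) − υ* ≤ ρ_{k̄}(p − 1) + ρ_{k*}(1 − p/r*) + (L_f̂ − ρ_{k̄})·ε. -/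
open Matrix

noncomputable section

/-! ### Auxiliary lemmas -/

lemma rayleigh_eq {a b : ℕ} (W : Matrix (Fin a) (Fin b) ℝ) (x : Fin b → ℝ) :
    x ⬝ᵥ ((Wᵀ * W) *ᵥ x) = ∑ i, (∑ j, W i j * x j) ^ 2 := by
  rw [← mulVec_mulVec, dotProduct_mulVec, vecMul_transpose]
  simp [dotProduct, mulVec, sq]

lemma specSet_bddAbove {a b : ℕ} (W : Matrix (Fin a) (Fin b) ℝ) :
    BddAbove {c | ∃ x : Fin b → ℝ, (∑ j, x j ^ 2) = 1 ∧ c = ∑ i, (∑ j, W i j * x j) ^ 2} := by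
  refine ⟨frobSq W, ?_⟩
  rintro c ⟨x, hx, rfl⟩
  unfold frobSq
  refine Finset.sum_le_sum fun i _ => ?_
  calc (∑ j, W i j * x j) ^ 2 ≤ (∑ j, W i j ^ 2) * (∑ j, x j ^ 2) :=
        Finset.sum_mul_sq_le_sq_mul_sq Finset.univ (W i) x
    _ = ∑ j, W i j ^ 2 := by rw [hx, mul_one]

lemma le_specSq {a b : ℕ} (W : Matrix (Fin a) (Fin b) ℝ) (x : Fin b → ℝ)
    (hx : (∑ j, x j ^ 2) = 1) : (∑ i, (∑ j, W i j * x j) ^ 2) ≤ specSq W :=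
  le_csSup (specSet_bddAbove W) ⟨x, hx, rfl⟩

lemma specSq_nonneg {a b : ℕ} (hb : 0 < b) (W : Matrix (Fin a) (Fin b) ℝ) : 0 ≤ specSq W := by
  have h := le_specSq W (Pi.single ⟨0, hb⟩ 1) (by simp [Pi.single_apply])
  exact le_trans (Finset.sum_nonneg fun i _ => sq_nonneg _) h

lemma specSq_le_frobSq {a b : ℕ} (hb : 0 < b) (W : Matrix (Fin a) (Fin b) ℝ) :
    specSq W ≤ frobSq W := by
  apply csSup_le
  · exact ⟨_, Pi.single ⟨0, hb⟩ 1, by simp [Pi.single_apply], rfl⟩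
  · rintro c ⟨x, hx, rfl⟩
    refine Finset.sum_le_sum fun i _ => ?_
    calc (∑ j, W i j * x j) ^ 2 ≤ (∑ j, W i j ^ 2) * (∑ j, x j ^ 2) :=
          Finset.sum_mul_sq_le_sq_mul_sq Finset.univ (W i) x
      _ = ∑ j, W i j ^ 2 := by rw [hx, mul_one]

lemma one_le_specSq {a b : ℕ} (W : Matrix (Fin a) (Fin b) ℝ) (hW : unitCols W) (j0 : Fin b) :
    1 ≤ specSq W := by
  have h := le_specSq W (Pi.single j0 1) (by simp [Pi.single_apply])
  have h2 : (∑ i, (∑ j, W i j * (Pi.single j0 1 : Fin b → ℝ) j) ^ 2) = 1 := by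
    have : ∀ i, (∑ j, W i j * (Pi.single j0 1 : Fin b → ℝ) j) = W i j0 := by
      intro i; simp [Pi.single_apply]
    simp only [this]
    exact hW j0
  linarith [h, h2.symm.le]

lemma eigen_unit {a b : ℕ} (W : Matrix (Fin a) (Fin b) ℝ)
    (hA : (Wᵀ * W).IsHermitian) (i : Fin b) :
    (∑ j, (hA.eigenvectorBasis i : Fin b → ℝ) j ^ 2) = 1 := by
  have h1 : ‖hA.eigenvectorBasis i‖ = 1 := hA.eigenvectorBasis.orthonormal.1 i
  rw [EuclideanSpace.norm_eq] at h1
  have := congrArg (· ^ 2) h1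
  simpa [Real.sq_sqrt (Finset.sum_nonneg fun j _ => sq_nonneg _)] using this

lemma eigen_eq_sum {a b : ℕ} (W : Matrix (Fin a) (Fin b) ℝ)
    (hA : (Wᵀ * W).IsHermitian) (i : Fin b) :
    hA.eigenvalues i =
      ∑ i', (∑ j, W i' j * (hA.eigenvectorBasis i : Fin b → ℝ) j) ^ 2 := by
  set v : Fin b → ℝ := (hA.eigenvectorBasis i : Fin b → ℝ)
  have h2 : (Wᵀ * W) *ᵥ v = hA.eigenvalues i • v := hA.mulVec_eigenvectorBasis i
  have h3 : v ⬝ᵥ ((Wᵀ * W) *ᵥ v) = hA.eigenvalues i * (v ⬝ᵥ v) := by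
    rw [h2, dotProduct_smul]; rfl
  have h4 : v ⬝ᵥ v = 1 := by
    have := eigen_unit W hA i
    simpa [dotProduct, sq] using this
  rw [← rayleigh_eq, h3, h4, mul_one]

lemma eigen_le_specSq {a b : ℕ} (W : Matrix (Fin a) (Fin b) ℝ)
    (hA : (Wᵀ * W).IsHermitian) (i : Fin b) : hA.eigenvalues i ≤ specSq W := by
  rw [eigen_eq_sum W hA i]
  exact le_specSq W _ (eigen_unit W hA i)

lemma frobSq_eq_trace {a b : ℕ} (W : Matrix (Fin a) (Fin b) ℝ) :
    frobSq W = (Wᵀ * W).trace := by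
  unfold frobSq
  rw [Matrix.trace, Finset.sum_comm]
  simp [Matrix.diag, Matrix.mul_apply, sq]

lemma trace_eq_sum_eigen {n : ℕ} (A : Matrix (Fin n) (Fin n) ℝ) (hA : A.IsHermitian) :
    A.trace = ∑ i, hA.eigenvalues i := by
  simpa using hA.trace_eq_sum_eigenvalues

lemma frobSq_le_rank_mul_specSq {a b : ℕ} (W : Matrix (Fin a) (Fin b) ℝ) :
    frobSq W ≤ (W.rank : ℝ) * specSq W := by
  have hA : (Wᵀ * W).IsHermitian := by simpa using isHermitian_conjTranspose_mul_self W
  have hrank : W.rank = Fintype.card {i // hA.eigenvalues i ≠ 0} := by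
    rw [← Matrix.rank_transpose_mul_self]; exact hA.rank_eq_card_non_zero_eigs
  rw [frobSq_eq_trace, trace_eq_sum_eigen _ hA, hrank, Fintype.card_subtype]
  rw [← Finset.sum_filter_ne_zero]
  calc ∑ i ∈ Finset.filter (fun i => hA.eigenvalues i ≠ 0) Finset.univ, hA.eigenvalues i
      ≤ ∑ _i ∈ Finset.filter (fun i => hA.eigenvalues i ≠ 0) Finset.univ, specSq W :=
        Finset.sum_le_sum fun i _ => eigen_le_specSq W hA i
    _ = _ := by rw [Finset.sum_const, nsmul_eq_mul]

lemma psd_diag {n : ℕ} (B : Matrix (Fin n) (Fin n) ℝ)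
    (hpsd : ∀ x : Fin n → ℝ, 0 ≤ x ⬝ᵥ (B *ᵥ x)) (i : Fin n) : 0 ≤ B i i := by
  have := hpsd (Pi.single i 1)
  simpa [dotProduct, mulVec, Pi.single_apply] using this

lemma psd_entry_sq {n : ℕ} (B : Matrix (Fin n) (Fin n) ℝ) (hsymm : B.IsSymm)
    (hpsd : ∀ x : Fin n → ℝ, 0 ≤ x ⬝ᵥ (B *ᵥ x)) (i j : Fin n) :
    B i j ^ 2 ≤ B i i * B j j := by
  rcases eq_or_ne i j with rfl | hij
  · rw [sq]
  · have hBij : B j i = B i j := hsymm.apply i j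
    have key : ∀ t : ℝ, 0 ≤ B i i * (t * t) + (2 * B i j) * t + B j j := by
      intro t
      have h0 := hpsd (fun k => t * (Pi.single i 1 : Fin n → ℝ) k + (Pi.single j 1 : Fin n → ℝ) k)
      have hexp : (fun k => t * (Pi.single i 1 : Fin n → ℝ) k + (Pi.single j 1 : Fin n → ℝ) k)
          ⬝ᵥ (B *ᵥ (fun k => t * (Pi.single i 1 : Fin n → ℝ) k + (Pi.single j 1 : Fin n → ℝ) k))
          = B i i * (t * t) + (2 * B i j) * t + B j j := by
        simp only [dotProduct, mulVec, Pi.single_apply, mul_ite, mul_one, mul_zero, mul_add,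
          add_mul, Finset.sum_add_distrib, Finset.mul_sum, ite_mul, zero_mul]
        simp [Finset.sum_add_distrib, Finset.sum_ite_eq', hij, hij.symm]
        rw [hBij]; ring
      rw [hexp] at h0
      exact h0
    have hd := discrim_le_zero key
    rw [discrim] at hd
    nlinarith [hd]

lemma frobNorm_le_trace_of_psd {n : ℕ} (B : Matrix (Fin n) (Fin n) ℝ) (hsymm : B.IsSymm)
    (hpsd : ∀ x : Fin n → ℝ, 0 ≤ x ⬝ᵥ (B *ᵥ x)) : frobNorm B ≤ B.trace := by
  have htr : 0 ≤ B.trace := Finset.sum_nonneg fun i _ => psd_diag B hpsd i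
  have hfs : frobSq B ≤ B.trace ^ 2 := by
    unfold frobSq
    rw [Matrix.trace]
    calc ∑ i, ∑ j, B i j ^ 2 ≤ ∑ i, ∑ j, B i i * B j j :=
          Finset.sum_le_sum fun i _ => Finset.sum_le_sum fun j _ => psd_entry_sq B hsymm hpsd i j
      _ = (∑ i, B i i) ^ 2 := by rw [sq, Finset.sum_mul_sum]
  unfold frobNorm
  calc Real.sqrt (frobSq B) ≤ Real.sqrt (B.trace ^ 2) := Real.sqrt_le_sqrt hfs
    _ = B.trace := by rw [Real.sqrt_sq htr]

lemma specSq_eq_top {a b : ℕ} (V : Matrix (Fin a) (Fin b) ℝ) (lam : ℝ) (u : Fin b → ℝ)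
    (htop : isTopEigen V lam u) : specSq V = lam := by
  obtain ⟨hu, heig, hray⟩ := htop
  have huu : u ⬝ᵥ u = 1 := by simpa [dotProduct, sq] using hu
  apply IsGreatest.csSup_eq
  constructor
  · refine ⟨u, hu, ?_⟩
    rw [← rayleigh_eq, heig, dotProduct_smul, smul_eq_mul, huu, mul_one]
  · rintro c ⟨x, hx, rfl⟩
    have h := hray x
    rw [rayleigh_eq] at h
    have hxx : x ⬝ᵥ x = 1 := by simpa [dotProduct, sq] using hx
    rw [hxx, mul_one] at h
    exact h

lemma vecMulVec_symm {b : ℕ} (u : Fin b → ℝ) : (vecMulVec u u).IsSymm := by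
  ext i j
  simp [vecMulVec_apply, mul_comm]

lemma psd_top_sub {a b : ℕ} (V : Matrix (Fin a) (Fin b) ℝ) (lam : ℝ) (u : Fin b → ℝ)
    (htop : isTopEigen V lam u) (x : Fin b → ℝ) :
    0 ≤ x ⬝ᵥ ((Vᵀ * V - lam • vecMulVec u u) *ᵥ x) := by
  obtain ⟨hu, heig, hray⟩ := htop
  have huu : u ⬝ᵥ u = 1 := by simpa [dotProduct, sq] using hu
  have hAsymm : (Vᵀ * V)ᵀ = Vᵀ * V := by rw [transpose_mul, transpose_transpose]
  have hxu : x ⬝ᵥ u = u ⬝ᵥ x := dotProduct_comm x u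
  have hmv : (vecMulVec u u) *ᵥ x = (u ⬝ᵥ x) • u := by
    ext k
    simp only [vecMulVec_apply, mulVec, dotProduct, Pi.smul_apply, smul_eq_mul,
      Finset.sum_mul]
    exact Finset.sum_congr rfl fun j _ => by ring
  have huAx : u ⬝ᵥ ((Vᵀ * V) *ᵥ x) = lam * (u ⬝ᵥ x) := by
    rw [dotProduct_mulVec, ← hAsymm, vecMul_transpose, heig, smul_dotProduct, smul_eq_mul]
  have e1 : x ⬝ᵥ ((Vᵀ * V - lam • vecMulVec u u) *ᵥ x)
      = x ⬝ᵥ ((Vᵀ * V) *ᵥ x) - lam * ((u ⬝ᵥ x) * (u ⬝ᵥ x)) := by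
    rw [sub_mulVec, dotProduct_sub, smul_mulVec, hmv]
    simp only [dotProduct_smul, smul_eq_mul, hxu]
    try ring
  have e2 : (x - (u ⬝ᵥ x) • u) ⬝ᵥ ((Vᵀ * V) *ᵥ (x - (u ⬝ᵥ x) • u))
      = x ⬝ᵥ ((Vᵀ * V) *ᵥ x) - lam * ((u ⬝ᵥ x) * (u ⬝ᵥ x)) := by
    rw [mulVec_sub, mulVec_smul, heig]
    simp only [sub_dotProduct, dotProduct_sub, dotProduct_smul, smul_dotProduct, smul_eq_mul,
      hxu, huAx, huu]
    try ring
  have hpos : 0 ≤ (x - (u ⬝ᵥ x) • u) ⬝ᵥ ((Vᵀ * V) *ᵥ (x - (u ⬝ᵥ x) • u)) := by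
    rw [rayleigh_eq]
    exact Finset.sum_nonneg fun i _ => sq_nonneg _
  rw [e1, ← e2]
  exact hpos

lemma frobSq_neg {a b : ℕ} (B : Matrix (Fin a) (Fin b) ℝ) : frobSq (-B) = frobSq B := by
  unfold frobSq
  simp only [Matrix.neg_apply, neg_sq]

lemma frobSq_unitCols {a b : ℕ} (W : Matrix (Fin a) (Fin b) ℝ) (hW : unitCols W) :
    frobSq W = b := by
  unfold frobSq
  rw [Finset.sum_comm]
  rw [Finset.sum_congr rfl fun j _ => hW j]
  simp

/-- Theorem 2, lower-bound gap of the rank-one projection. In the setting of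
the objective gap bound, if moreover the penalty parameters are nondecreasing, `L_f̂ ≥ ρ_k̄`, and
`f̃(V^{k*}) ≤ υ*`, then `f̂(xxᵀ) − υ* ≤ ρ_k̄(p−1) + ρ_{k*}(1 − p/r*) + (L_f̂ − ρ_k̄)ε`. -/
theorem rank_one_projection_lower_bound_gap (m p : ℕ) (hp : 0 < p)
    (fhat : Matrix (Fin p) (Fin p) ℝ → ℝ) (Lfhat : ℝ) (hLfhat : 0 < Lfhat)
    (hlip : ∀ X Y : Matrix (Fin p) (Fin p) ℝ, X.IsSymm → Y.IsSymm →
      |fhat X - fhat Y| ≤ Lfhat * frobNorm (X - Y))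
    (kbar : ℕ) (hkbar : 1 ≤ kbar) (ρ : ℕ → ℝ) (hρ : ∀ k ≤ kbar, 0 < ρ k)
    (hmono : ∀ j < kbar, ρ j ≤ ρ (j + 1))
    (Vseq : ℕ → Matrix (Fin m) (Fin p) ℝ) (hS : ∀ k ≤ kbar, unitCols (Vseq k))
    (hdec : ∀ k < kbar,
      fhat ((Vseq (k + 1))ᵀ * Vseq (k + 1)) - ρ k * specSq (Vseq (k + 1)) ≤
        fhat ((Vseq k)ᵀ * Vseq k) - ρ k * specSq (Vseq k))
    (ε : ℝ) (hε : 0 < ε) (hgap : frobSq (Vseq kbar) - specSq (Vseq kbar) ≤ ε)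
    (lam : ℝ) (P1 : Fin p → ℝ) (htop : isTopEigen (Vseq kbar) lam P1)
    (x : Fin p → ℝ) (hx : x = specNorm (Vseq kbar) • P1)
    (hLρ : ρ kbar ≤ Lfhat)
    (kstar : ℕ) (hkstar : kstar < kbar) (υstar : ℝ)
    (hval : fhat ((Vseq kstar)ᵀ * Vseq kstar) ≤ υstar) :
    fhat (vecMulVec x x) - υstar ≤
      ρ kbar * ((p : ℝ) - 1) + ρ kstar * (1 - (p : ℝ) / ((Vseq kstar).rank : ℝ))
        + (Lfhat - ρ kbar) * ε := by
  have hspec : specSq (Vseq kbar) = lam := specSq_eq_top _ _ _ htop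
  have hVb : unitCols (Vseq kbar) := hS kbar le_rfl
  have hfrobVb : frobSq (Vseq kbar) = p := frobSq_unitCols _ hVb
  have hlam_nonneg : 0 ≤ lam := hspec ▸ specSq_nonneg hp _
  have hgap' : (p : ℝ) - lam ≤ ε := by rw [← hspec, ← hfrobVb]; exact hgap
  have hu : (∑ j, P1 j ^ 2) = 1 := htop.1
  -- x xᵀ = lam • P1 P1ᵀ
  have hxx : vecMulVec x x = lam • vecMulVec P1 P1 := by
    ext i j
    simp only [vecMulVec_apply, hx, Pi.smul_apply, smul_eq_mul, Matrix.smul_apply,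
      specNorm, hspec]
    rw [show Real.sqrt lam * P1 i * (Real.sqrt lam * P1 j)
      = Real.sqrt lam * Real.sqrt lam * (P1 i * P1 j) by ring, Real.mul_self_sqrt hlam_nonneg]
  set B := (Vseq kbar)ᵀ * Vseq kbar - lam • vecMulVec P1 P1 with hB
  have hBsymm : B.IsSymm := by
    rw [Matrix.IsSymm, hB, transpose_sub, transpose_smul, transpose_mul, transpose_transpose,
      vecMulVec_symm P1]
  have hBpsd : ∀ y : Fin p → ℝ, 0 ≤ y ⬝ᵥ (B *ᵥ y) := psd_top_sub (Vseq kbar) lam P1 htop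
  have hBtr : B.trace = (p : ℝ) - lam := by
    rw [hB, trace_sub, trace_smul, ← frobSq_eq_trace, hfrobVb]
    have htr1 : (vecMulVec P1 P1).trace = 1 := by
      rw [Matrix.trace]
      simpa [Matrix.diag, vecMulVec_apply, sq] using hu
    rw [htr1, smul_eq_mul, mul_one]
  have hfn : frobNorm B ≤ (p : ℝ) - lam := hBtr ▸ frobNorm_le_trace_of_psd B hBsymm hBpsd
  -- Lipschitz step
  have hsymm1 : (vecMulVec x x).IsSymm := vecMulVec_symm x
  have hsymm2 : ((Vseq kbar)ᵀ * Vseq kbar).IsSymm := by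
    rw [Matrix.IsSymm, transpose_mul, transpose_transpose]
  have hlipx := hlip (vecMulVec x x) ((Vseq kbar)ᵀ * Vseq kbar) hsymm1 hsymm2
  have hdiff : vecMulVec x x - (Vseq kbar)ᵀ * Vseq kbar = -B := by
    rw [hxx, hB, neg_sub]
  have hfd : frobNorm (vecMulVec x x - (Vseq kbar)ᵀ * Vseq kbar) = frobNorm B := by
    rw [hdiff]; unfold frobNorm; rw [frobSq_neg]
  have hstep1 : fhat (vecMulVec x x) ≤ fhat ((Vseq kbar)ᵀ * Vseq kbar)
      + Lfhat * ((p : ℝ) - lam) := by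
    have h1 := (abs_le.mp hlipx).2
    have h2 : Lfhat * frobNorm (vecMulVec x x - (Vseq kbar)ᵀ * Vseq kbar)
        ≤ Lfhat * ((p : ℝ) - lam) := by
      rw [hfd]; exact mul_le_mul_of_nonneg_left hfn hLfhat.le
    linarith
  -- telescoping
  have tele : ∀ k, kstar ≤ k → k ≤ kbar →
      fhat ((Vseq k)ᵀ * Vseq k) - ρ k * specSq (Vseq k) ≤
        fhat ((Vseq kstar)ᵀ * Vseq kstar) - ρ kstar * specSq (Vseq kstar)
          + (ρ kstar - ρ k) := by
    intro k hk1
    induction k, hk1 using Nat.le_induction with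
    | base => intro _; simp
    | succ k hk ih =>
      intro hk2
      have hklt : k < kbar := hk2
      have ihk := ih (le_of_lt hklt)
      have hd := hdec k hklt
      have hm := hmono k hklt
      have hs1 : 1 ≤ specSq (Vseq (k + 1)) := one_le_specSq _ (hS (k + 1) hk2) ⟨0, hp⟩
      have hprod : (ρ (k + 1) - ρ k) * 1 ≤ (ρ (k + 1) - ρ k) * specSq (Vseq (k + 1)) :=
        mul_le_mul_of_nonneg_left hs1 (sub_nonneg.mpr hm)
      linarith
  have htel := tele kbar (le_of_lt hkstar) le_rfl
  rw [hspec] at htel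
  -- rank bound
  have h1 := frobSq_le_rank_mul_specSq (Vseq kstar)
  rw [frobSq_unitCols _ (hS kstar (le_of_lt hkstar))] at h1
  have hppos : (0 : ℝ) < p := by exact_mod_cast hp
  have hrankpos : 0 < ((Vseq kstar).rank : ℝ) := by
    by_contra h
    push_neg at h
    have hr0 : ((Vseq kstar).rank : ℝ) = 0 := le_antisymm h (Nat.cast_nonneg _)
    rw [hr0, zero_mul] at h1
    linarith
  have hpr : (p : ℝ) / ((Vseq kstar).rank : ℝ) ≤ specSq (Vseq kstar) := by
    rw [div_le_iff₀ hrankpos]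
    linarith [h1]
  -- final assembly
  have hprod1 : ρ kstar * ((p : ℝ) / ((Vseq kstar).rank : ℝ)) ≤ ρ kstar * specSq (Vseq kstar) :=
    mul_le_mul_of_nonneg_left hpr (hρ kstar (le_of_lt hkstar)).le
  have hprod2 : (Lfhat - ρ kbar) * ((p : ℝ) - lam) ≤ (Lfhat - ρ kbar) * ε :=
    mul_le_mul_of_nonneg_left hgap' (sub_nonneg.mpr hLρ)
  nlinarith [hstep1, htel, hval, hprod1, hprod2]


end
end
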